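/- Let α ≥ 1/2, β = √((α+4)/α), b_α = √(1+α(1−β)/2), ρ_k = α^α b_α^{4k+2α}, and let 𝔏_k(s) = β^{α/2} e^{(1−β)s/2} ℒ_k^{(α−1)}(βs). Then for each k ∈ ℕ₀, ∫_0^∞ e^{−t/α} 𝔏_k(t) dP₀(t) = ((α)_k/k!)^{1/2} β^{α/2} ρ_k. -/

import Mathlib

open MeasureTheory Real Set

/-- The generalized Laguerre polynomial `L_n^{(α−1)}(x) = Σ_{k=0}^n ((α+k)_{n−k}/(n−k)!) (−x)^k/k!`. -/
noncomputable def laguerre (α : ℝ) (n : ℕ) (x : ℝ) : ℝ :=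
  ∑ k ∈ Finset.range (n + 1),
    (Real.Gamma (α + n) / Real.Gamma (α + k)) / (Nat.factorial (n - k) : ℝ) *
      (-x) ^ k / (Nat.factorial k : ℝ)

/-- The normalized generalized Laguerre polynomial `ℒ_n^{(α−1)} = √(n!/(α)_n) L_n^{(α−1)}`,
with `(α)_n = Γ(α+n)/Γ(α)`. -/
noncomputable def laguerreN (α : ℝ) (n : ℕ) (x : ℝ) : ℝ :=
  Real.sqrt ((Nat.factorial n : ℝ) / (Real.Gamma (α + n) / Real.Gamma α)) * laguerre α n x

/-- With `β = √((α+4)/α)`, `b = √(1+α(1−β)/2)`, `ρ_k = α^α b^{4k+2α}`, and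
`𝔏_k(s) = β^{α/2} e^{(1−β)s/2} ℒ_k^{(α−1)}(βs)`:
`∫₀^∞ e^{−t/α} 𝔏_k(t) dP₀(t) = ((α)_k/k!)^{1/2} β^{α/2} ρ_k`. -/
theorem laguerre_exp_inner_product (α β b ρ : ℝ) (k : ℕ) (hα : 1/2 ≤ α)
    (hβ : β = Real.sqrt ((α + 4) / α))
    (hb : b = Real.sqrt (1 + α * (1 - β) / 2))
    (hρ : ρ = α ^ α * b ^ (4 * (k : ℝ) + 2 * α)) :
    ∫ t in Ioi (0 : ℝ),
        Real.exp (-t / α) * (β ^ (α / 2) * Real.exp ((1 - β) * t / 2) * laguerreN α k (β * t)) *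
          (t ^ (α - 1) * Real.exp (-t) / Real.Gamma α)
      = Real.sqrt ((Real.Gamma (α + k) / Real.Gamma α) / (Nat.factorial k : ℝ)) *
          β ^ (α / 2) * ρ := by
  have hα0 : (0:ℝ) < α := lt_of_lt_of_le (by norm_num) hα
  have hfrac : 1 < (α + 4) / α := by rw [lt_div_iff₀ hα0]; linarith
  have hβ1 : 1 < β := by
    rw [hβ, show (1:ℝ) = Real.sqrt 1 by simp]
    exact Real.sqrt_lt_sqrt zero_le_one hfrac
  have hβ0 : 0 < β := by linarith
  have hβsq : β ^ 2 = (α + 4) / α := by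
    rw [hβ, Real.sq_sqrt (by positivity)]
  have h4 : α * (β - 1) * (β + 1) = 4 := by
    have h : α * β ^ 2 = α + 4 := by rw [hβsq]; field_simp
    nlinarith [h]
  have hinv : 1 / α = (β ^ 2 - 1) / 4 := by
    rw [div_eq_div_iff hα0.ne' (by norm_num : (4:ℝ) ≠ 0)]
    linear_combination -h4
  have harg : 1 + α * (1 - β) / 2 = (β - 1) / (β + 1) := by
    rw [eq_div_iff (by linarith)]
    nlinarith [h4]
  have hb2 : b ^ 2 = (β - 1) / (β + 1) := by
    rw [hb, Real.sq_sqrt (by rw [harg]; exact le_of_lt (div_pos (by linarith) (by linarith))), harg]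
  have hb0 : 0 < b := by
    rw [hb, harg]
    exact Real.sqrt_pos.mpr (div_pos (by linarith) (by linarith))
  have hΓα : 0 < Real.Gamma α := Real.Gamma_pos_of_pos hα0
  have hΓαk : ∀ j : ℕ, 0 < Real.Gamma (α + j) := fun j =>
    Real.Gamma_pos_of_pos (by positivity)
  set v : ℝ := (β + 1) ^ 2 / 4 with hv
  have hv0 : 0 < v := by positivity
  set C1 : ℝ := β ^ (α/2) *
      Real.sqrt ((Nat.factorial k : ℝ) / (Real.Gamma (α + k) / Real.Gamma α)) / Real.Gamma α
    with hC1
  -- step A: rewrite integrand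
  have stepA : (∫ t in Ioi (0 : ℝ),
        Real.exp (-t / α) * (β ^ (α / 2) * Real.exp ((1 - β) * t / 2) * laguerreN α k (β * t)) *
          (t ^ (α - 1) * Real.exp (-t) / Real.Gamma α))
      = ∫ t in Ioi (0:ℝ), ∑ j ∈ Finset.range (k + 1),
          (C1 * (Real.Gamma (α + k) / Real.Gamma (α + j) / (Nat.factorial (k - j) : ℝ) *
            (-β) ^ j / (Nat.factorial j : ℝ))) *
          (t ^ (α + (j:ℝ) - 1) * Real.exp (-(v * t))) := by
    refine setIntegral_congr_fun measurableSet_Ioi fun t ht => ?_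
    have ht0 : (0:ℝ) < t := ht
    have e1 : Real.exp (-(v * t)) =
        Real.exp (-t/α) * Real.exp ((1-β)*t/2) * Real.exp (-t) := by
      rw [← Real.exp_add, ← Real.exp_add]
      congr 1
      linear_combination t * hinv
    simp only [laguerreN, laguerre, Finset.mul_sum, Finset.sum_mul, Finset.sum_div]
    refine Finset.sum_congr rfl fun j hj => ?_
    have hpow : t ^ (α + (j:ℝ) - 1) = t ^ (α - 1) * t ^ j := by
      rw [← Real.rpow_natCast t j, ← Real.rpow_add ht0]
      ring_nf
    have hneg : (-(β * t)) ^ j = (-β) ^ j * t ^ j := by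
      rw [show -(β * t) = (-β) * t by ring, mul_pow]
    rw [hpow, e1, hneg, hC1]
    ring
  rw [stepA]
  -- step B: integrability and termwise integration
  have hint : ∀ j : ℕ, IntegrableOn
      (fun t : ℝ => t ^ (α + (j:ℝ) - 1) * Real.exp (-(v * t))) (Ioi 0) := by
    intro j
    have h := integrableOn_rpow_mul_exp_neg_mul_rpow (s := α + (j:ℝ) - 1) (p := 1) (b := v)
      (by push_cast; linarith) zero_lt_one hv0
    simpa [Real.rpow_one] using h
  rw [integral_finset_sum _ fun j _ => ((hint j).const_mul _)]
  have hIj : ∀ j : ℕ, (∫ t in Ioi (0:ℝ), t ^ (α + (j:ℝ) - 1) * Real.exp (-(v * t)))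
      = (1 / v) ^ (α + (j:ℝ)) * Real.Gamma (α + (j:ℝ)) := fun j =>
    integral_rpow_mul_exp_neg_mul_Ioi (by positivity) hv0
  simp_rw [MeasureTheory.integral_const_mul, hIj]
  -- step C: evaluate the sum
  have sum_eval : ∑ j ∈ Finset.range (k + 1),
      (C1 * (Real.Gamma (α + k) / Real.Gamma (α + j) / (Nat.factorial (k - j) : ℝ) *
        (-β) ^ j / (Nat.factorial j : ℝ))) *
      ((1 / v) ^ (α + (j:ℝ)) * Real.Gamma (α + (j:ℝ)))
      = C1 * Real.Gamma (α + k) * (1/v) ^ α / (Nat.factorial k : ℝ) * (-(β/v) + 1) ^ k := by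
    rw [add_pow, Finset.mul_sum]
    refine Finset.sum_congr rfl fun j hj => ?_
    have hjk : j ≤ k := Nat.lt_succ_iff.mp (Finset.mem_range.mp hj)
    have hfac : ((k.choose j : ℝ)) * (j.factorial : ℝ) * ((k-j).factorial : ℝ)
        = (k.factorial : ℝ) := by
      exact_mod_cast congrArg (Nat.cast : ℕ → ℝ) (Nat.choose_mul_factorial_mul_factorial hjk)
    have h1 : ((1:ℝ)/v) ^ (α + (j:ℝ)) = (1/v) ^ α * (1/v) ^ j := by
      rw [Real.rpow_add (by positivity), Real.rpow_natCast]
    have hbv' : (-(β/v)) ^ j = (-β) ^ j * (1/v) ^ j := by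
      rw [← mul_pow]; congr 1; ring
    rw [h1, one_pow, hbv', ← hfac]
    have hj0 : (j.factorial : ℝ) ≠ 0 := Nat.cast_ne_zero.mpr (Nat.factorial_ne_zero j)
    have hkj0 : ((k-j).factorial : ℝ) ≠ 0 := Nat.cast_ne_zero.mpr (Nat.factorial_ne_zero _)
    have hch : ((k.choose j : ℕ) : ℝ) ≠ 0 := Nat.cast_ne_zero.mpr (Nat.choose_pos hjk).ne'
    have hΓj : Real.Gamma (α + j) ≠ 0 := ne_of_gt (hΓαk j)
    field_simp
  rw [sum_eval]
  -- step D: final algebra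
  have hbv : -(β/v) + 1 = b ^ 4 := by
    rw [show (b:ℝ)^4 = (b^2)^2 by ring, hb2, hv]
    field_simp
    ring
  have hv1 : 1 / v = α * b ^ 2 := by
    have h1 : β + 1 ≠ 0 := by positivity
    rw [hb2, hv]
    field_simp
    nlinarith [h4]
  have hvα : (1/v) ^ α = α ^ α * (b ^ 2) ^ α := by
    rw [hv1, Real.mul_rpow hα0.le (by positivity)]
  have hρ' : ρ = α ^ α * ((b ^ 4) ^ k * (b ^ 2) ^ α) := by
    rw [hρ, Real.rpow_add hb0, show (4 : ℝ) * k = ((4 * k : ℕ) : ℝ) by push_cast; ring,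
      Real.rpow_natCast]
    congr 1
    congr 1
    · rw [pow_mul]
    · rw [show (2:ℝ) * α = ((2:ℕ):ℝ) * α by norm_num, Real.rpow_mul hb0.le,
        Real.rpow_natCast]
  -- sqrt manipulation
  set q : ℝ := Real.Gamma (α + k) / Real.Gamma α / (Nat.factorial k : ℝ) with hq
  have hq0 : 0 < q := by
    have : (0:ℝ) < (Nat.factorial k : ℝ) := by positivity
    exact div_pos (div_pos (hΓαk k) hΓα) this
  have hsq : Real.sqrt ((Nat.factorial k : ℝ) / (Real.Gamma (α + k) / Real.Gamma α)) * q
      = Real.sqrt q := by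
    have h2 : ((Nat.factorial k : ℝ) / (Real.Gamma (α + k) / Real.Gamma α)) = q⁻¹ := by
      rw [hq]
      field_simp
    have hs0 : Real.sqrt q ≠ 0 := ne_of_gt (Real.sqrt_pos.mpr hq0)
    rw [h2, Real.sqrt_inv, inv_mul_eq_div, div_eq_iff hs0, Real.mul_self_sqrt hq0.le]
  rw [hbv, hvα, hρ', hC1]
  have hk0 : (Nat.factorial k : ℝ) ≠ 0 := Nat.cast_ne_zero.mpr (Nat.factorial_ne_zero k)
  calc β ^ (α/2) * Real.sqrt ((Nat.factorial k : ℝ) / (Real.Gamma (α + k) / Real.Gamma α)) /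
          Real.Gamma α * Real.Gamma (α + k) * (α ^ α * (b ^ 2) ^ α) /
          (Nat.factorial k : ℝ) * (b ^ 4) ^ k
      = (Real.sqrt ((Nat.factorial k : ℝ) / (Real.Gamma (α + k) / Real.Gamma α)) * q) *
          β ^ (α/2) * (α ^ α * ((b ^ 4) ^ k * (b ^ 2) ^ α)) := by
        rw [hq]; ring
    _ = Real.sqrt q * β ^ (α/2) * (α ^ α * ((b ^ 4) ^ k * (b ^ 2) ^ α)) := by rw [hsq]
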